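/- Let S be a countable type with a level function ℓ : S → ℕ, and suppose there is a real number r ≥ 1 such that for every m ∈ ℕ the set {x ∈ S : ℓ(x) = m} has at most r^m elements. Let 1 ≤ p < ∞ and let f : S → ℂ satisfy Σ_{x ∈ S} |f(x)|^{p+ε} < ∞ for every ε > 0. Then for every δ with 0 < δ < 1, Σ_{x ∈ S} |f(x)|^p·(1−δ)^{p·ℓ(x)} < ∞; that is, the function f_δ(x) = (1−δ)^{ℓ(x)}·f(x) lies in ℓ^p(S) for every δ ∈ (0,1). -/

import Mathlib

open Finset in
/-- Auxiliary: on a set with at most exponentially growing level sets,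
`x ↦ u ^ ℓ x` is summable once `r * u < 1`. -/
lemma stmt10_aux {S : Type*} (ℓ : S → ℕ) (r : ℝ) (hr : 0 ≤ r)
    (hfin : ∀ m : ℕ, {x : S | ℓ x = m}.Finite)
    (hcard : ∀ m : ℕ, (Nat.card {x : S | ℓ x = m} : ℝ) ≤ r ^ m)
    (u : ℝ) (hu : 0 ≤ u) (hru : r * u < 1) :
    Summable fun x : S => u ^ ℓ x := by
  classical
  have hru0 : 0 ≤ r * u := mul_nonneg hr hu
  have hgeom : Summable fun m : ℕ => (r * u) ^ m :=
    summable_geometric_of_lt_one hru0 hru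
  apply summable_of_sum_le (c := ∑' m : ℕ, (r * u) ^ m)
    (fun x => pow_nonneg hu _)
  intro s
  have key : ∑ x ∈ s, u ^ ℓ x = ∑ m ∈ s.image ℓ, ∑ x ∈ s.filter (fun x => ℓ x = m), u ^ ℓ x := by
    rw [Finset.sum_fiberwise_eq_sum_filter s (s.image ℓ) ℓ (fun x => u ^ ℓ x)]
    rw [Finset.filter_true_of_mem (fun x hx => Finset.mem_image_of_mem ℓ hx)]
  rw [key]
  calc ∑ m ∈ s.image ℓ, ∑ x ∈ s.filter (fun x => ℓ x = m), u ^ ℓ x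
      ≤ ∑ m ∈ s.image ℓ, (r * u) ^ m := by
        apply Finset.sum_le_sum
        intro m _
        have h1 : ∑ x ∈ s.filter (fun x => ℓ x = m), u ^ ℓ x
            = (s.filter (fun x => ℓ x = m)).card * u ^ m := by
          rw [Finset.sum_congr rfl (fun x hx => by
            rw [(Finset.mem_filter.1 hx).2])]
          simp [Finset.sum_const, nsmul_eq_mul]
        rw [h1]
        have h2 : (s.filter (fun x => ℓ x = m)).card ≤ (hfin m).toFinset.card := by
          apply Finset.card_le_card
          intro x hx
          simp only [Set.Finite.mem_toFinset, Set.mem_setOf_eq]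
          exact (Finset.mem_filter.1 hx).2
        have h3 : ((hfin m).toFinset.card : ℝ) ≤ r ^ m := by
          have := hcard m
          rwa [Nat.card_eq_card_finite_toFinset (hfin m)] at this
        have h4 : ((s.filter (fun x => ℓ x = m)).card : ℝ) ≤ r ^ m :=
          le_trans (by exact_mod_cast h2) h3
        calc ((s.filter (fun x => ℓ x = m)).card : ℝ) * u ^ m
            ≤ r ^ m * u ^ m := by
              apply mul_le_mul_of_nonneg_right h4 (pow_nonneg hu m)
          _ = (r * u) ^ m := (mul_pow r u m).symm
    _ ≤ ∑' m : ℕ, (r * u) ^ m :=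
        Summable.sum_le_tsum _ (fun m _ => pow_nonneg hru0 m) hgeom

/-- On a countable index set with at most exponentially growing level sets,
a function lying in `ℓ^{p+ε}` for every `ε > 0` is `p`-tempered. -/
theorem stmt10 {S : Type*} [Countable S] (ℓ : S → ℕ) (r : ℝ) (hr : 1 ≤ r)
    (hfin : ∀ m : ℕ, {x : S | ℓ x = m}.Finite)
    (hcard : ∀ m : ℕ, (Nat.card {x : S | ℓ x = m} : ℝ) ≤ r ^ m)
    (p : ℝ) (hp : 1 ≤ p) (f : S → ℂ)
    (hf : ∀ ε : ℝ, 0 < ε → Summable fun x : S => ‖f x‖ ^ (p + ε)) :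
    ∀ δ : ℝ, 0 < δ → δ < 1 →
      Summable fun x : S => ‖f x‖ ^ p * (1 - δ) ^ (p * (ℓ x : ℝ)) := by
  intro δ hδ0 hδ1
  set t : ℝ := 1 - δ with ht
  have ht0 : 0 < t := by simp [ht]; linarith
  have ht1 : t < 1 := by simp [ht]; linarith
  have hp0 : 0 < p := lt_of_lt_of_le one_pos hp
  -- v = t ^ p (rpow), v < 1
  set v : ℝ := t ^ p with hv
  have hv0 : 0 < v := Real.rpow_pos_of_pos ht0 p
  have hv1 : v < 1 := Real.rpow_lt_one ht0.le ht1 hp0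
  -- choose n with v ^ n < r⁻¹, so r * v ^ (n+2) < 1
  obtain ⟨n, hn⟩ : ∃ n : ℕ, v ^ n < r⁻¹ :=
    exists_pow_lt_of_lt_one (inv_pos.2 (lt_of_lt_of_le one_pos hr)) hv1
  set N : ℕ := n + 2 with hN
  have hr0 : 0 < r := lt_of_lt_of_le one_pos hr
  set u : ℝ := v ^ N with hu
  have hu0 : 0 ≤ u := (pow_pos hv0 N).le
  have hru : r * u < 1 := by
    have h1 : u ≤ v ^ n := pow_le_pow_of_le_one hv0.le hv1.le (by omega)
    have : r * u ≤ r * v ^ n := mul_le_mul_of_nonneg_left h1 hr0.le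
    calc r * u ≤ r * v ^ n := this
      _ < r * r⁻¹ := mul_lt_mul_of_pos_left hn hr0
      _ = 1 := mul_inv_cancel₀ hr0.ne'
  -- conjugate exponents q = N/(N-1) and N
  set m : ℝ := (n : ℝ) + 1 with hm
  have hm0 : 0 < m := by positivity
  have hNm : (N : ℝ) = m + 1 := by simp [hN, hm]; ring
  set q : ℝ := (m + 1) / m with hq
  have hconj : q.HolderConjugate (N : ℝ) := by
    rw [Real.holderConjugate_iff]
    constructor
    · rw [hq]
      rw [lt_div_iff₀ hm0]
      linarith
    · rw [hq, hNm]
      field_simp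
  -- ε = p / m
  have hε : (0 : ℝ) < p / m := div_pos hp0 hm0
  have hsum1 : Summable fun x : S => ‖f x‖ ^ (p + p / m) := hf _ hε
  have hsum2 : Summable fun x : S => u ^ ℓ x :=
    stmt10_aux ℓ r hr0.le hfin hcard u hu0 hru
  refine Summable.of_nonneg_of_le
    (fun x => mul_nonneg (Real.rpow_nonneg (norm_nonneg _) p)
      (Real.rpow_nonneg ht0.le _)) ?_ (hsum1.add hsum2)
  intro x
  set a : ℝ := ‖f x‖ ^ p with ha
  set b : ℝ := t ^ (p * (ℓ x : ℝ)) with hb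
  have ha0 : 0 ≤ a := Real.rpow_nonneg (norm_nonneg _) p
  have hb0 : 0 ≤ b := Real.rpow_nonneg ht0.le _
  have young : a * b ≤ a ^ q / q + b ^ (N : ℝ) / (N : ℝ) :=
    Real.young_inequality_of_nonneg ha0 hb0 hconj
  have h1 : a ^ q / q ≤ a ^ q :=
    div_le_self (Real.rpow_nonneg ha0 q) hconj.lt.le
  have h2 : b ^ (N : ℝ) / (N : ℝ) ≤ b ^ (N : ℝ) := by
    apply div_le_self (Real.rpow_nonneg hb0 _)
    exact_mod_cast Nat.one_le_iff_ne_zero.2 (by omega)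
  have haq : a ^ q = ‖f x‖ ^ (p + p / m) := by
    rw [ha, ← Real.rpow_mul (norm_nonneg _)]
    congr 1
    rw [hq]
    field_simp
  have hbN : b ^ (N : ℝ) = u ^ ℓ x := by
    rw [hb, ← Real.rpow_mul ht0.le, hu, hv, ← Real.rpow_natCast (t ^ p) N,
      ← Real.rpow_mul ht0.le, ← Real.rpow_natCast (t ^ (p * (N : ℝ))) (ℓ x),
      ← Real.rpow_mul ht0.le]
    congr 1
    ring
  calc ‖f x‖ ^ p * t ^ (p * (ℓ x : ℝ)) = a * b := rfl
    _ ≤ a ^ q / q + b ^ (N : ℝ) / (N : ℝ) := young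
    _ ≤ a ^ q + b ^ (N : ℝ) := add_le_add h1 h2
    _ = ‖f x‖ ^ (p + p / m) + u ^ ℓ x := by rw [haq, hbN]
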